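/- Let n be a positive integer, ε_a = e^{2πia/n}, u a positive integer, and h a nonnegative integer. For any set V of consecutive integers contained in [0, u), ∑_{a=1}^{n-1} |∑_{v∈V} v^h ε_a^v| ≤ 2 u^h n log n. -/

import Mathlib

open Complex Real Finset


lemma sin_ge_aux {x : ℝ} (h0 : 0 ≤ x) (h1 : x ≤ 1/2) : π * x * (1 - x) ≤ Real.sin (π * x) := by
  rcases eq_or_lt_of_le h0 with rfl | hx0
  · simp
  rcases le_or_gt (π * x) 1 with hle | hgt
  · have hcube := Real.sin_gt_sub_cube (x := π * x) (by positivity)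
    have hx1 : π ^ 2 * x ≤ 4 := by nlinarith [Real.pi_pos, Real.pi_lt_d2]
    have key : (π*x)^3/4 ≤ π * x * x := by
      nlinarith [mul_nonneg (mul_nonneg (mul_nonneg Real.pi_pos.le h0) h0)
        (by linarith : (0:ℝ) ≤ 4 - π^2*x)]
    nlinarith [pow_pos (mul_pos Real.pi_pos hx0) 3]
  · set s := 1/2 - x with hs
    have hs0 : 0 ≤ s := by rw [hs]; linarith
    have hpl : 3.141592 < π := Real.pi_gt_d6
    have hpu : π < 3.15 := Real.pi_lt_d2
    have hxgt : 1/π < x := by rw [div_lt_iff₀ Real.pi_pos]; linarith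
    have h315 : (1:ℝ)/3.15 < 1/π := by apply one_div_lt_one_div_of_lt <;> linarith
    have hsb : s ≤ 0.183 := by rw [hs]; have hx2 := h315.trans hxgt; norm_num at hx2 ⊢; linarith
    have hs2' : s^2 ≤ 0.0335 := by nlinarith
    have hsin : Real.sin (π * x) = Real.cos (π * s) := by
      rw [hs, show π * (1/2 - x) = π/2 - π * x by ring, Real.cos_pi_div_two_sub]
    rw [hsin]
    have hcos : 1 - (π*s)^2/2 ≤ Real.cos (π * s) := Real.one_sub_sq_div_two_le_cos
    have hgoal : π * x * (1 - x) ≤ 1 - (π*s)^2/2 := by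
      have hx : x = 1/2 - s := by rw [hs]; ring
      rw [hx]
      have hfac : 0 ≤ π^2/2 - π := by nlinarith
      nlinarith [mul_le_mul_of_nonneg_right hs2' hfac]
    linarith

lemma sin_ge {x : ℝ} (h0 : 0 ≤ x) (h1 : x ≤ 1) : π * x * (1 - x) ≤ Real.sin (π * x) := by
  rcases le_or_gt x (1/2) with hle | hgt
  · exact sin_ge_aux h0 hle
  · have := sin_ge_aux (x := 1 - x) (by linarith) (by linarith)
    rw [show π * (1 - x) = π - π * x by ring, Real.sin_pi_sub] at this
    nlinarith


lemma sin_pos_of (n a : ℕ) (h1 : 1 ≤ a) (h2 : a < n) : π * a / n * (1 - a / n) ≤ Real.sin (π * a / n) ∧ 0 < π * a / n * (1 - (a:ℝ) / n) := by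
  have hnn : 0 < n := by omega
  have hn0 : 0 < (n:ℝ) := by exact_mod_cast hnn
  have hx0 : 0 ≤ (a:ℝ)/n := by positivity
  have hx1 : (a:ℝ)/n ≤ 1 := by
    rw [div_le_one hn0]; exact_mod_cast h2.le
  have hkey := sin_ge hx0 hx1
  have heq : π * (a:ℝ) / n = π * ((a:ℝ)/n) := by ring
  constructor
  · rw [heq]; exact hkey
  · have ha : (0:ℝ) < a := by exact_mod_cast h1
    have hlt : (a:ℝ) < n := by exact_mod_cast h2
    have h1x : 0 < 1 - (a:ℝ)/n := by
      rw [sub_pos, div_lt_one hn0]; exact hlt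
    have := Real.pi_pos
    rw [heq]
    positivity

lemma inv_sin_le (n a : ℕ) (h1 : 1 ≤ a) (h2 : a < n) :
    1 / Real.sin (π * a / n) ≤ (n:ℝ) / π * (1/(a:ℝ) + 1/((n:ℝ)-a)) := by
  obtain ⟨hge, hpos⟩ := sin_pos_of n a h1 h2
  have hs : 0 < Real.sin (π * a / n) := lt_of_lt_of_le hpos hge
  have h1' : 1 / Real.sin (π * a / n) ≤ 1 / (π * a / n * (1 - (a:ℝ) / n)) :=
    one_div_le_one_div_of_le hpos hge
  refine h1'.trans (le_of_eq ?_)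
  have ha : (0:ℝ) < a := by exact_mod_cast h1
  have hn0 : (0:ℝ) < n := by
    have : 0 < n := by omega
    exact_mod_cast this
  have hna : (0:ℝ) < (n:ℝ) - a := by
    have : (a:ℝ) < n := by exact_mod_cast h2
    linarith
  have hπ := Real.pi_pos
  field_simp
  ring

lemma sum_reflect (n : ℕ) : ∑ a ∈ Ico 1 n, (1/((n:ℝ)-a)) = ∑ a ∈ Ico 1 n, 1/(a:ℝ) := by
  refine Finset.sum_nbij' (fun a => n - a) (fun a => n - a) ?_ ?_ ?_ ?_ ?_ <;>
    intro a ha <;> simp only [Finset.mem_Ico] at ha ⊢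
  · omega
  · omega
  · omega
  · omega
  · have h1 : ((n - a : ℕ) : ℝ) = (n:ℝ) - a := Nat.cast_sub (by omega)
    rw [h1]

lemma sum_inv_eq_harmonic (n : ℕ) (hn : 1 ≤ n) :
    ∑ a ∈ Ico 1 n, 1/(a:ℝ) = (harmonic (n-1) : ℝ) := by
  rw [show n = (n-1)+1 by omega, Finset.Ico_add_one_right_eq_Icc, harmonic_eq_sum_Icc]
  push_cast
  simp [one_div]

lemma two_div_pi_harmonic_le (n : ℕ) (hn : 2 ≤ n) :
    2/π * (harmonic (n-1):ℝ) ≤ Real.log n := by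
  have hpi := Real.pi_gt_d6
  have hpi' := Real.pi_pos
  have hlog2 := Real.log_two_gt_d9
  have hlog3 : 11/7 * Real.log 2 ≤ Real.log 3 := by
    have h := Real.log_le_log (by norm_num : (0:ℝ) < 2^11) (by norm_num : (2:ℝ)^11 ≤ 3^7)
    rw [Real.log_pow, Real.log_pow] at h
    push_cast at h; linarith
  rcases lt_or_ge n 6 with h6 | h6
  · have h4 : Real.log 4 = 2 * Real.log 2 := by
      rw [show (4:ℝ) = 2^2 by norm_num, Real.log_pow]; push_cast; ring
    have h5 : 2 * Real.log 2 ≤ Real.log 5 := by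
      have h := Real.log_le_log (by norm_num : (0:ℝ) < 2^2) (by norm_num : (2:ℝ)^2 ≤ 5)
      rw [Real.log_pow] at h; push_cast at h; linarith
    interval_cases n
    · rw [show (harmonic (2-1) : ℝ) = 1 by norm_num [harmonic, Finset.sum_range_succ],
        div_mul_eq_mul_div, div_le_iff₀ hpi']
      push_cast; nlinarith
    · rw [show (harmonic (3-1) : ℝ) = 3/2 by norm_num [harmonic, Finset.sum_range_succ],
        div_mul_eq_mul_div, div_le_iff₀ hpi']
      push_cast; nlinarith
    · rw [show (harmonic (4-1) : ℝ) = 11/6 by norm_num [harmonic, Finset.sum_range_succ],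
        div_mul_eq_mul_div, div_le_iff₀ hpi']
      push_cast [h4]; nlinarith
    · rw [show (harmonic (5-1) : ℝ) = 25/12 by norm_num [harmonic, Finset.sum_range_succ],
        div_mul_eq_mul_div, div_le_iff₀ hpi']
      push_cast; nlinarith
  · have hH : (harmonic (n-1) : ℝ) ≤ 1 + Real.log (n-1 : ℕ) := harmonic_le_one_add_log _
    have hmono : Real.log ((n-1 : ℕ):ℝ) ≤ Real.log n := by
      apply Real.log_le_log (by exact_mod_cast Nat.sub_pos_of_lt (by omega))
      exact_mod_cast Nat.sub_le n 1
    have hlog6 : 18/7 * Real.log 2 ≤ Real.log 6 := by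
      have h := Real.log_le_log (by norm_num : (0:ℝ) < 2^18) (by norm_num : (2:ℝ)^18 ≤ 6^7)
      rw [Real.log_pow, Real.log_pow] at h
      push_cast at h; linarith
    have hlogn : Real.log 6 ≤ Real.log n := by
      apply Real.log_le_log (by norm_num)
      exact_mod_cast h6
    have hln : 1.78 ≤ Real.log n := by nlinarith
    rw [div_mul_eq_mul_div, div_le_iff₀ hpi']
    nlinarith

lemma sum_inv_sin (n : ℕ) (hn : 2 ≤ n) :
    ∑ a ∈ Ico 1 n, 1 / Real.sin (π * a / n) ≤ n * Real.log n := by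
  have hpi := Real.pi_pos
  calc ∑ a ∈ Ico 1 n, 1 / Real.sin (π * a / n)
      ≤ ∑ a ∈ Ico 1 n, (n:ℝ)/π * (1/(a:ℝ) + 1/((n:ℝ)-a)) := by
        apply Finset.sum_le_sum
        intro a ha
        simp only [Finset.mem_Ico] at ha
        exact inv_sin_le n a ha.1 ha.2
    _ = (n:ℝ)/π * (2 * (harmonic (n-1) : ℝ)) := by
        rw [← Finset.mul_sum, Finset.sum_add_distrib, sum_reflect,
          sum_inv_eq_harmonic n (by omega)]
        ring
    _ = (n:ℝ) * (2/π * (harmonic (n-1) : ℝ)) := by ring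
    _ ≤ (n:ℝ) * Real.log n := by
        apply mul_le_mul_of_nonneg_left (two_div_pi_harmonic_le n hn) (by positivity)

lemma sin_pos_of' (n a : ℕ) (h1 : 1 ≤ a) (h2 : a < n) : 0 < Real.sin (π * a / n) := by
  obtain ⟨hge, hpos⟩ := sin_pos_of n a h1 h2
  exact lt_of_lt_of_le hpos hge

-- |e^{iθ} - 1| = 2 * sin(θ/2) type computation, specialized
lemma abs_exp_sub_one (θ : ℝ) :
    ‖Complex.exp (θ * Complex.I) - 1‖ = Real.sqrt (2 - 2 * Real.cos θ) := by
  have : Complex.exp (θ * Complex.I) - 1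
      = ((Real.cos θ - 1 : ℝ) : ℂ) + ((Real.sin θ : ℝ) : ℂ) * Complex.I := by
    rw [show ((θ:ℂ)) * Complex.I = (θ:ℂ) * Complex.I by rfl, Complex.exp_mul_I]
    rw [← Complex.ofReal_cos, ← Complex.ofReal_sin]
    push_cast
    ring
  rw [this, Complex.norm_add_mul_I]
  congr 1
  nlinarith [Real.sin_sq_add_cos_sq θ]

section eps
variable (n a : ℕ)

noncomputable def eps (n a : ℕ) : ℂ := Complex.exp ((2 * π * a / n : ℝ) * Complex.I)

variable (ha1 : 1 ≤ a) (ha2 : a < n)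
include ha1 ha2

lemma eps_abs : ‖eps n a‖ = 1 := by
  rw [eps, Complex.norm_exp]
  simp

lemma eps_ne_zero : eps n a ≠ 0 := Complex.exp_ne_zero _

lemma eps_ne_one : eps n a ≠ 1 := by
  rw [eps, ne_eq, Complex.exp_eq_one_iff]
  rintro ⟨k, hk⟩
  have him : (2 * π * a / n : ℝ) = k * (2 * π) := by
    have := congrArg Complex.im hk
    simpa using this
  have hπ := Real.pi_pos
  have hn0 : (0:ℝ) < n := by
    have : 0 < n := by omega
    exact_mod_cast this
  have hak : (a:ℝ) = k * n := by
    field_simp at him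
    nlinarith [him]
  have hakz : (a:ℤ) = k * n := by exact_mod_cast hak
  rcases le_or_gt k 0 with hk0 | hk0
  · have : (k:ℤ) * n ≤ 0 := mul_nonpos_of_nonpos_of_nonneg hk0 (by positivity)
    omega
  · have : (1:ℤ) ≤ k := hk0
    have : (n:ℤ) ≤ k * n := le_mul_of_one_le_left (by positivity) this
    omega

lemma eps_sub_one_abs : ‖eps n a - 1‖ = 2 * Real.sin (π * a / n) := by
  rw [eps, abs_exp_sub_one]
  have h2 : 2 - 2 * Real.cos (2 * π * a / n) = (2 * Real.sin (π * a / n))^2 := by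
    have hc := Real.cos_two_mul (π * a / n)
    have hp := Real.sin_sq_add_cos_sq (π * a / n)
    rw [show 2 * π * a / n = 2 * (π * a / n) by ring, hc]
    nlinarith
  rw [h2, Real.sqrt_sq (by nlinarith [sin_pos_of' n a ha1 ha2])]

end eps

lemma geom_partial_bound (n a : ℕ) (ha1 : 1 ≤ a) (ha2 : a < n) (σ : ℤ) (m : ℕ) :
    ‖∑ j ∈ range m, eps n a ^ (σ + (j:ℤ))‖ ≤ 1 / Real.sin (π * a / n) := by
  have hs := sin_pos_of' n a ha1 ha2
  have hne := eps_ne_zero n a ha1 ha2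
  have hno : ‖eps n a‖ = 1 := by exact eps_abs n a ha1 ha2
  have h1 : ∑ j ∈ range m, eps n a ^ (σ + (j:ℤ))
      = eps n a ^ σ * ((eps n a ^ m - 1) / (eps n a - 1)) := by
    rw [← geom_sum_eq (eps_ne_one n a ha1 ha2) m, Finset.mul_sum]
    refine Finset.sum_congr rfl fun j _ => ?_
    rw [zpow_add₀ hne, zpow_natCast]
  rw [h1, norm_mul, norm_div]
  have hz : ‖eps n a ^ σ‖ = 1 := by
    rw [norm_zpow, hno, one_zpow]
  have hnum : ‖eps n a ^ m - 1‖ ≤ 2 := by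
    calc ‖eps n a ^ m - 1‖ ≤ ‖eps n a ^ m‖ + ‖(1:ℂ)‖ := norm_sub_le _ _
    _ ≤ 2 := by rw [norm_pow, hno, one_pow, norm_one]; norm_num
  have hden : ‖eps n a - 1‖ = 2 * Real.sin (π * a / n) := by
    exact eps_sub_one_abs n a ha1 ha2
  rw [hz, hden, one_mul]
  rw [div_le_div_iff₀ (by positivity) hs]
  nlinarith

lemma inner_bound (n a : ℕ) (ha1 : 1 ≤ a) (ha2 : a < n) (u : ℤ) (hu : 0 < u) (h : ℕ)
    (σ τ : ℤ) (hσ : 0 ≤ σ) (hτ : τ ≤ u) :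
    ‖∑ v ∈ Finset.Ico σ τ, (v:ℂ)^h * eps n a ^ v‖
      ≤ 2 * (u:ℝ)^h / Real.sin (π * a / n) := by
  have hs := sin_pos_of' n a ha1 ha2
  have hu0 : (0:ℝ) ≤ (u:ℝ)^h := by positivity
  rcases le_or_gt τ σ with hts | hst
  · rw [Finset.Ico_eq_empty (by exact not_lt.mpr hts), Finset.sum_empty, norm_zero]
    positivity
  set N := (τ - σ).toNat with hN
  have hNz : (N:ℤ) = τ - σ := Int.toNat_of_nonneg (by omega)
  have hN0 : 0 < N := by omega
  set Fr : ℕ → ℝ := fun k => ((σ + k : ℤ) : ℝ)^h with hFr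
  set f : ℕ → ℂ := fun k => ((σ + k : ℤ) : ℂ)^h with hf
  set g : ℕ → ℂ := fun k => eps n a ^ (σ + (k:ℤ)) with hg
  have hfF : ∀ k, f k = ((Fr k : ℝ) : ℂ) := by
    intro k; rw [hf, hFr]; push_cast; ring
  have hFrnn : ∀ k, 0 ≤ Fr k := by
    intro k
    have : (0:ℝ) ≤ ((σ + k : ℤ) : ℝ) := by exact_mod_cast by omega
    positivity
  have hmono : ∀ i j : ℕ, i ≤ j → Fr i ≤ Fr j := by
    intro i j hij
    apply pow_le_pow_left₀ (by exact_mod_cast by omega)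
    exact_mod_cast by omega
  have hFrle : ∀ k : ℕ, k < N → Fr k ≤ (u:ℝ)^h := by
    intro k hk
    apply pow_le_pow_left₀ (by exact_mod_cast by omega)
    exact_mod_cast by omega
  -- reindex
  have hre : ∑ v ∈ Finset.Ico σ τ, (v:ℂ)^h * eps n a ^ v
      = ∑ k ∈ range N, f k * g k := by
    refine Finset.sum_nbij' (fun v => (v - σ).toNat) (fun k => σ + (k:ℤ)) ?_ ?_ ?_ ?_ ?_
    · intro v hv; simp only [Finset.mem_Ico, Finset.mem_range] at hv ⊢; omega
    · intro k hk; simp only [Finset.mem_Ico, Finset.mem_range] at hk ⊢; omega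
    · intro v hv; simp only [Finset.mem_Ico] at hv
      show σ + (((v - σ).toNat : ℕ) : ℤ) = v
      omega
    · intro k hk; simp only [Finset.mem_range] at hk
      show (σ + (k:ℤ) - σ).toNat = k
      omega
    · intro v hv
      simp only [Finset.mem_Ico] at hv
      show (v:ℂ)^h * eps n a ^ v
          = ((σ + ((v - σ).toNat:ℤ) : ℤ):ℂ)^h * eps n a ^ (σ + ((v - σ).toNat:ℤ))
      have hv' : σ + ((v - σ).toNat : ℤ) = v := by omega
      rw [hv']
  rw [hre]
  -- Abel summation
  have habel := Finset.sum_range_by_parts f g N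
  simp only [smul_eq_mul] at habel
  rw [habel]
  set G : ℕ → ℂ := fun m => ∑ i ∈ range m, g i with hG
  have hGb : ∀ m, ‖G m‖ ≤ 1 / Real.sin (π * a / n) :=
    fun m => geom_partial_bound n a ha1 ha2 σ m
  have hfn : ∀ k, ‖f k‖ = Fr k := by
    intro k; rw [hfF k, Complex.norm_real, Real.norm_eq_abs, _root_.abs_of_nonneg (hFrnn k)]
  have hstep : ∀ i, ‖f (i+1) - f i‖ = Fr (i+1) - Fr i := by
    intro i
    rw [hfF, hfF, ← Complex.ofReal_sub, Complex.norm_real, Real.norm_eq_abs,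
      _root_.abs_of_nonneg (by linarith [hmono i (i+1) (by omega)])]
  calc ‖f (N-1) * G N - ∑ i ∈ range (N-1), (f (i+1) - f i) * G (i+1)‖
      ≤ ‖f (N-1) * G N‖ + ‖∑ i ∈ range (N-1), (f (i+1) - f i) * G (i+1)‖ := norm_sub_le _ _
    _ ≤ Fr (N-1) * (1 / Real.sin (π * a / n))
        + ∑ i ∈ range (N-1), (Fr (i+1) - Fr i) * (1 / Real.sin (π * a / n)) := by
        gcongr ?_ + ?_
        · rw [norm_mul, hfn]
          exact mul_le_mul_of_nonneg_left (hGb N) (hFrnn _)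
        · refine (norm_sum_le _ _).trans (Finset.sum_le_sum fun i _ => ?_)
          rw [norm_mul, hstep]
          exact mul_le_mul (le_refl _) (hGb (i+1)) (norm_nonneg _)
            (by linarith [hmono i (i+1) (by omega)])
    _ = (2 * Fr (N-1) - Fr 0) * (1 / Real.sin (π * a / n)) := by
        rw [← Finset.sum_mul, Finset.sum_range_sub (fun i => Fr i)]
        ring
    _ ≤ (2 * (u:ℝ)^h) * (1 / Real.sin (π * a / n)) := by
        have hle := hFrle (N-1) (by omega)
        have h0 := hFrnn 0
        exact mul_le_mul_of_nonneg_right (by linarith) (by positivity)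
    _ = 2 * (u:ℝ)^h / Real.sin (π * a / n) := by ring

set_option maxHeartbeats 1000000 in
theorem sum_abs_weighted_geometric_le (n : ℕ) (hn : 0 < n) (u : ℤ) (hu : 0 < u)
    (h : ℕ) (σ τ : ℤ) (hσ : 0 ≤ σ) (hτ : τ ≤ u) :
    ∑ a ∈ Finset.Ico 1 n,
        ‖∑ v ∈ Finset.Ico σ τ,
          (v : ℂ) ^ h * Complex.exp (2 * Real.pi * Complex.I * a * v / n)‖
      ≤ 2 * (u : ℝ) ^ h * n * Real.log n := by
  rcases eq_or_lt_of_le (Nat.succ_le_of_lt hn) with h1 | hn2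
  · simp [← h1]
  have hn2 : 2 ≤ n := hn2
  have hterm : ∀ a ∈ Finset.Ico 1 n,
      ‖∑ v ∈ Finset.Ico σ τ,
          (v : ℂ) ^ h * Complex.exp (2 * Real.pi * Complex.I * a * v / n)‖
        ≤ 2 * (u:ℝ)^h * (1 / Real.sin (π * a / n)) := by
    intro a ha
    simp only [Finset.mem_Ico] at ha
    have heq : ∀ v : ℤ, Complex.exp (2 * Real.pi * Complex.I * a * v / n) = eps n a ^ v := by
      intro v
      rw [eps, ← Complex.exp_int_mul]
      congr 1
      push_cast
      ring
    have hb := inner_bound n a ha.1 ha.2 u hu h σ τ hσ hτ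
    calc ‖∑ v ∈ Finset.Ico σ τ, (v : ℂ) ^ h * Complex.exp (2 * Real.pi * Complex.I * a * v / n)‖
        = ‖∑ v ∈ Finset.Ico σ τ, (v:ℂ)^h * eps n a ^ v‖ := by
          congr 1
          exact Finset.sum_congr rfl fun v _ => by rw [heq v]
      _ ≤ 2 * (u:ℝ)^h / Real.sin (π * a / n) := hb
      _ = 2 * (u:ℝ)^h * (1 / Real.sin (π * a / n)) := by ring
  calc ∑ a ∈ Finset.Ico 1 n,
        ‖∑ v ∈ Finset.Ico σ τ,
          (v : ℂ) ^ h * Complex.exp (2 * Real.pi * Complex.I * a * v / n)‖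
      ≤ ∑ a ∈ Finset.Ico 1 n, 2 * (u:ℝ)^h * (1 / Real.sin (π * a / n)) :=
        Finset.sum_le_sum hterm
    _ = 2 * (u:ℝ)^h * ∑ a ∈ Finset.Ico 1 n, 1 / Real.sin (π * a / n) := by
        rw [Finset.mul_sum]
    _ ≤ 2 * (u:ℝ)^h * (n * Real.log n) := by
        apply mul_le_mul_of_nonneg_left (sum_inv_sin n hn2) (by positivity)
    _ = 2 * (u:ℝ)^h * n * Real.log n := by ring
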